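/- Let X be a compact subset of a Banach space B with finite box-counting dimension. Then for every α > 1 + d_B(X) there exist a separable Hilbert space H, a bounded linear map Φ : B → H, and a constant C_α > 0 such that C_α^{-1}‖x − y‖^α ≤ ‖Φ(x) − Φ(y)‖_H ≤ C_α‖x − y‖ for all x, y ∈ X. -/

import Mathlib

open Filter Metric Set Pointwise Topology

/-- `coverNum X ε` : minimal number of balls of radius `ε` with centres in `X` covering `X`. -/
noncomputable def coverNum {E : Type*} [SeminormedAddCommGroup E] (X : Set E) (ε : ℝ) : ℕ∞ :=
  sInf {n : ℕ∞ | ∃ F : Finset E, ↑F ⊆ X ∧ (X ⊆ ⋃ c ∈ F, Metric.ball c ε) ∧ n = F.card}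

/-- extended logarithm of an extended natural number. -/
noncomputable def elog (n : ℕ∞) : EReal :=
  if n = ⊤ then ⊤ else ((Real.log n.toNat : ℝ) : EReal)

/-- The upper box-counting dimension `d_B(X) = limsup_{ε → 0⁺} log N(X,ε) / (-log ε)`. -/
noncomputable def dimBox {E : Type*} [SeminormedAddCommGroup E] (X : Set E) : EReal :=
  Filter.limsup (fun ε : ℝ => elog (coverNum X ε) / ((-Real.log ε : ℝ) : EReal)) (𝓝[>] 0)

/-- `thickNum X ε` : smallest dimension of a finite-dimensional subspace `V` with
`dist(x, V) ≤ ε` for all `x ∈ X` (`⊤` if none exists). -/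
noncomputable def thickNum {E : Type*} [NormedAddCommGroup E] [NormedSpace ℝ E]
    (X : Set E) (ε : ℝ) : ℕ∞ :=
  sInf {n : ℕ∞ | ∃ V : Submodule ℝ E, FiniteDimensional ℝ V ∧ n = Module.finrank ℝ V ∧
    ∀ x ∈ X, Metric.infDist x (V : Set E) ≤ ε}

/-- The thickness exponent `τ(X) = limsup_{ε → 0⁺} log d(X,ε) / (-log ε)`. -/
noncomputable def thickness {E : Type*} [NormedAddCommGroup E] [NormedSpace ℝ E]
    (X : Set E) : EReal :=
  Filter.limsup (fun ε : ℝ => elog (thickNum X ε) / ((-Real.log ε : ℝ) : EReal)) (𝓝[>] 0)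

/-- `dualThickNum X θ ε` : minimal dimension of a subspace `U ⊆ E*` such that for all
`x, y ∈ X` with `‖x - y‖ ≥ ε` some `φ ∈ U` has `|φ(x-y)| ≥ ε^(1+θ)`. -/
noncomputable def dualThickNum {E : Type*} [NormedAddCommGroup E] [NormedSpace ℝ E]
    (X : Set E) (θ ε : ℝ) : ℕ∞ :=
  sInf {n : ℕ∞ | ∃ U : Submodule ℝ (E →L[ℝ] ℝ), FiniteDimensional ℝ U ∧ n = Module.finrank ℝ U ∧
    ∀ x ∈ X, ∀ y ∈ X, ε ≤ ‖x - y‖ → ∃ φ ∈ U, ε ^ (1 + θ) ≤ |φ (x - y)|}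

noncomputable def dualThickTheta {E : Type*} [NormedAddCommGroup E] [NormedSpace ℝ E]
    (X : Set E) (θ : ℝ) : EReal :=
  Filter.limsup (fun ε : ℝ => elog (dualThickNum X θ ε) / ((-Real.log ε : ℝ) : EReal)) (𝓝[>] 0)

/-- The dual thickness `τ*(X) = lim_{θ → 0⁺} τ*_θ(X)` (the limit exists by monotonicity and
equals the limsup as `θ → 0⁺`). -/
noncomputable def dualThickness {E : Type*} [NormedAddCommGroup E] [NormedSpace ℝ E]
    (X : Set E) : EReal :=
  Filter.limsup (fun θ : ℝ => dualThickTheta X θ) (𝓝[>] 0)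

/-- `sigmaNum X α ε` : minimal dimension of a subspace `V ⊆ E*` such that whenever
`x, y ∈ X` with `‖x - y‖ ≥ ε` there is `Φ ∈ V` with `‖Φ‖ = 1` and `|Φ(x-y)| ≥ α ε`. -/
noncomputable def sigmaNum {E : Type*} [NormedAddCommGroup E] [NormedSpace ℝ E]
    (X : Set E) (α ε : ℝ) : ℕ∞ :=
  sInf {n : ℕ∞ | ∃ V : Submodule ℝ (E →L[ℝ] ℝ), FiniteDimensional ℝ V ∧ n = Module.finrank ℝ V ∧
    ∀ x ∈ X, ∀ y ∈ X, ε ≤ ‖x - y‖ → ∃ Φ ∈ V, ‖Φ‖ = 1 ∧ α * ε ≤ |Φ (x - y)|}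

noncomputable def sigmaExp {E : Type*} [NormedAddCommGroup E] [NormedSpace ℝ E]
    (X : Set E) (α : ℝ) : EReal :=
  Filter.limsup (fun ε : ℝ => elog (sigmaNum X α ε) / ((-Real.log ε : ℝ) : EReal)) (𝓝[>] 0)


open scoped ENNReal NNReal

private lemma exists_net {E : Type*} [SeminormedAddCommGroup E] {X : Set E} (hX : IsCompact X)
    {ε : ℝ} (hε : 0 < ε) :
    ∃ F : Finset E, ↑F ⊆ X ∧ (X ⊆ ⋃ c ∈ F, Metric.ball c ε) ∧ (F.card : ℕ∞) = coverNum X ε := by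
  classical
  have hne : {n : ℕ∞ | ∃ F : Finset E, ↑F ⊆ X ∧ (X ⊆ ⋃ c ∈ F, Metric.ball c ε) ∧ n = F.card}.Nonempty := by
    obtain ⟨t, ht⟩ := hX.elim_finite_subcover (fun x : X => Metric.ball (x : E) ε)
      (fun x => isOpen_ball) (fun x hx => mem_iUnion.2 ⟨⟨x, hx⟩, mem_ball_self hε⟩)
    refine ⟨(t.image (Subtype.val)).card, t.image Subtype.val, ?_, ?_, rfl⟩
    · intro z hz
      simp only [Finset.coe_image, Set.mem_image] at hz
      obtain ⟨w, _, rfl⟩ := hz; exact w.2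
    · intro z hz
      obtain ⟨w, hw⟩ := mem_iUnion.1 (ht hz)
      simp only [mem_iUnion, exists_prop] at hw ⊢
      exact ⟨w, Finset.mem_image_of_mem _ hw.1, hw.2⟩
  have := csInf_mem hne
  obtain ⟨F, h1, h2, h3⟩ := this
  exact ⟨F, h1, h2, h3.symm⟩

private lemma coverNum_pos {E : Type*} [SeminormedAddCommGroup E] {X : Set E} (hne : X.Nonempty)
    (ε : ℝ) : 1 ≤ coverNum X ε := by
  refine le_sInf ?_
  rintro n ⟨F, hF, hcov, rfl⟩
  obtain ⟨x, hx⟩ := hne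
  obtain ⟨c, hc⟩ := mem_iUnion.1 (hcov hx)
  simp only [mem_iUnion, exists_prop] at hc
  simpa using Nat.one_le_iff_ne_zero.2 (Finset.card_ne_zero_of_mem hc.1)

private lemma elog_nonneg {n : ℕ∞} (h : 1 ≤ n) : (0:EReal) ≤ elog n := by
  unfold elog
  split
  · exact le_top
  · rename_i h'
    have h1 : 1 ≤ n.toNat := by
      have := ENat.toNat_le_toNat h h'
      simpa using this
    exact_mod_cast Real.log_nonneg (by exact_mod_cast h1)

private lemma dimBox_nonneg {E : Type*} [SeminormedAddCommGroup E] {X : Set E} (hne : X.Nonempty) :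
    (0 : EReal) ≤ dimBox X := by
  have h : ∀ᶠ ε in 𝓝[>] (0:ℝ),
      (0:EReal) ≤ elog (coverNum X ε) / ((-Real.log ε : ℝ) : EReal) := by
    filter_upwards [Ioo_mem_nhdsGT_of_mem (Set.mem_Ico.2 ⟨le_refl (0:ℝ), zero_lt_one⟩)] with ε hε
    have hl : (0:ℝ) < -Real.log ε := by
      have := Real.log_neg hε.1 hε.2; linarith
    exact EReal.div_nonneg (elog_nonneg (coverNum_pos hne ε)) (by exact_mod_cast hl.le)
  calc (0:EReal) = limsup (fun _ : ℝ => (0:EReal)) (𝓝[>] (0:ℝ)) := by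
        simp [limsup_const]
    _ ≤ _ := limsup_le_limsup h

private lemma coverNum_growth {E : Type*} [SeminormedAddCommGroup E] {X : Set E} (hX : IsCompact X)
    {D : ℝ} (hD : dimBox X < (D : EReal)) :
    ∃ δ : ℝ, 0 < δ ∧ δ ≤ 1 ∧ ∀ ε : ℝ, 0 < ε → ε < δ →
      ((coverNum X ε).toNat : ℝ) ≤ ε ^ (-D) := by
  have hev : ∀ᶠ ε in 𝓝[>] (0:ℝ),
      elog (coverNum X ε) / ((-Real.log ε : ℝ) : EReal) < (D : EReal) :=
    eventually_lt_of_limsup_lt hD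
  have hev2 := hev.and (Ioo_mem_nhdsGT_of_mem (Set.mem_Ico.2 ⟨le_refl (0:ℝ), zero_lt_one⟩))
  rw [eventually_iff, mem_nhdsGT_iff_exists_Ioo_subset] at hev2
  obtain ⟨u, hu, hsub⟩ := hev2
  refine ⟨min u 1, lt_min hu zero_lt_one, min_le_right _ _, ?_⟩
  intro ε hε0 hεδ
  have hmem := hsub ⟨hε0, lt_of_lt_of_le hεδ (min_le_left _ _)⟩
  obtain ⟨hlt, hε1, hε1'⟩ := hmem
  have hl : (0:ℝ) < -Real.log ε := by
    have := Real.log_neg hε0 hε1'; linarith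
  obtain ⟨F, _, _, hcard⟩ := exists_net hX hε0
  have hNne : coverNum X ε ≠ ⊤ := by rw [← hcard]; exact (WithTop.coe_ne_top)
  set N : ℕ := (coverNum X ε).toNat with hN
  have helog : elog (coverNum X ε) = ((Real.log N : ℝ) : EReal) := by
    unfold elog; rw [if_neg hNne]
  rw [helog, ← EReal.coe_div, EReal.coe_lt_coe_iff, div_lt_iff₀ hl] at hlt
  rcases Nat.eq_zero_or_pos N with h0 | hpos
  · rw [h0]; simp; positivity
  · have hNpos : (0:ℝ) < N := by exact_mod_cast hpos
    have hNe : (N:ℝ) = Real.exp (Real.log N) := (Real.exp_log hNpos).symm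
    rw [hNe, Real.rpow_def_of_pos hε0]
    have : Real.log ε * (-D) = D * (-Real.log ε) := by ring
    rw [this]
    exact Real.exp_le_exp.2 hlt.le

private lemma lp_sep : TopologicalSpace.SeparableSpace (lp (fun _ : ℕ × ℕ => ℝ) 2) := by
  have b : HilbertBasis (ℕ × ℕ) ℝ (lp (fun _ : ℕ × ℕ => ℝ) 2) := default
  have hd : Dense (Submodule.span ℝ (Set.range b) : Set (lp (fun _ : ℕ × ℕ => ℝ) 2)) := by
    have h := b.dense_span
    have h2 := congrArg
      (fun (V : Submodule ℝ (lp (fun _ : ℕ × ℕ => ℝ) 2)) => (V : Set (lp (fun _ : ℕ × ℕ => ℝ) 2))) h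
    simp only [Submodule.topologicalClosure_coe, Submodule.top_coe] at h2
    rwa [dense_iff_closure_eq]
  have hsep : TopologicalSpace.IsSeparable
      (Submodule.span ℝ (Set.range b) : Set (lp (fun _ : ℕ × ℕ => ℝ) 2)) :=
    (Set.countable_range b).isSeparable.span
  have huniv : TopologicalSpace.IsSeparable (univ : Set (lp (fun _ : ℕ × ℕ => ℝ) 2)) := by
    have := hsep.closure
    rwa [hd.closure_eq] at this
  exact TopologicalSpace.isSeparable_univ_iff.1 huniv

set_option maxHeartbeats 1000000 in
/-- a compact subset of a Banach space with finite box-counting dimension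
embeds linearly into a separable Hilbert space with `α⁻¹`-Hölder inverse, for any
`α > 1 + d_B(X)`. -/
theorem exists_hilbert_embedding_of_dimBox {B : Type*}
    [NormedAddCommGroup B] [NormedSpace ℝ B] [CompleteSpace B]
    (X : Set B) (hX : IsCompact X) (hfin : dimBox X < ⊤)
    (α : ℝ) (hα : 1 + dimBox X < (α : EReal)) :
    ∃ (H : Type) (_ : NormedAddCommGroup H) (_ : InnerProductSpace ℝ H),
      CompleteSpace H ∧ TopologicalSpace.SeparableSpace H ∧
      ∃ (Φ : B →L[ℝ] H) (C : ℝ), 0 < C ∧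
        ∀ x ∈ X, ∀ y ∈ X,
          C⁻¹ * ‖x - y‖ ^ α ≤ ‖Φ x - Φ y‖ ∧ ‖Φ x - Φ y‖ ≤ C * ‖x - y‖ := by
  classical
  rcases Set.eq_empty_or_nonempty X with rfl | hne
  · exact ⟨ℝ, inferInstance, inferInstance, inferInstance, inferInstance, 0, 1, one_pos,
      fun x hx => absurd hx (Set.notMem_empty x)⟩
  -- dimension parameters
  have h0 : (0:EReal) ≤ dimBox X := dimBox_nonneg hne
  set d₀ : ℝ := (dimBox X).toReal with hd₀def
  have hdb : dimBox X = (d₀ : EReal) :=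
    (EReal.coe_toReal hfin.ne (lt_of_lt_of_le (by norm_num : (⊥:EReal) < 0) h0).ne').symm
  have hd₀0 : 0 ≤ d₀ := by
    have := h0; rw [hdb] at this; exact_mod_cast this
  have hα' : 1 + d₀ < α := by
    rw [hdb] at hα
    have : ((1 + d₀ : ℝ) : EReal) < (α : EReal) := by
      rw [EReal.coe_add]; exact_mod_cast hα
    exact_mod_cast this
  have hα1 : 1 < α := by linarith
  set D : ℝ := (d₀ + (α - 1))/2 with hDdef
  have hDd : d₀ < D := by rw [hDdef]; linarith
  have hDα : D < α - 1 := by rw [hDdef]; linarith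
  have hD0 : 0 ≤ D := by rw [hDdef]; linarith
  set β : ℝ := α - 1 - D with hβdef
  have hβ0 : 0 < β := by rw [hβdef]; linarith
  have hDB : dimBox X < (D : EReal) := by rw [hdb]; exact_mod_cast hDd
  obtain ⟨δ, hδ0, hδ1, hcov⟩ := coverNum_growth hX hDB
  -- diameter bound
  obtain ⟨M₀, hM₀⟩ := isBounded_iff_forall_norm_le.1 hX.isBounded
  set M : ℝ := max (2 * M₀) 1 with hMdef
  have hM1 : 1 ≤ M := le_max_right _ _
  have hM0 : 0 < M := lt_of_lt_of_le one_pos hM1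
  have hdM : ∀ x ∈ X, ∀ y ∈ X, ‖x - y‖ ≤ M := by
    intro x hx y hy
    calc ‖x - y‖ ≤ ‖x‖ + ‖y‖ := norm_sub_le x y
      _ ≤ M₀ + M₀ := add_le_add (hM₀ x hx) (hM₀ y hy)
      _ ≤ M := by rw [hMdef]; refine le_trans (by ring_nf; rfl) (le_max_left _ _)
  -- scales
  set r : ℕ → ℝ := fun n => δ * (1/2)^(n+1) with hrdef
  have hr0 : ∀ n, 0 < r n := fun n => by positivity
  have hrhalf : ∀ n, r (n+1) = r n / 2 := by intro n; rw [hrdef]; ring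
  have hrδ : ∀ n, r n ≤ δ / 2 := by
    intro n
    rw [hrdef]
    calc δ * (1/2)^(n+1) ≤ δ * (1/2)^(0+1) := by
          apply mul_le_mul_of_nonneg_left _ hδ0.le
          exact pow_le_pow_of_le_one (by norm_num) (by norm_num) (by omega)
      _ = δ / 2 := by ring
  set sc : ℕ → ℝ := fun n => r n / 8 with hscdef
  have hsc0 : ∀ n, 0 < sc n := fun n => by have := hr0 n; rw [hscdef]; positivity
  have hscδ : ∀ n, sc n < δ := fun n => by
    have h1 := hrδ n; have := hr0 n; rw [hscdef]; simp only; linarith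
  -- nets
  have hnet := fun n => exists_net hX (hsc0 n)
  choose Fn hFnX hFncov hFncard using hnet
  have hcard : ∀ n, ((Fn n).card : ℝ) ≤ (sc n) ^ (-D) := by
    intro n
    have h1 := hcov (sc n) (hsc0 n) (hscδ n)
    rw [← hFncard n] at h1
    simpa using h1
  -- Hahn-Banach functionals for pairs
  set φ0 : B × B → (B →L[ℝ] ℝ) := fun p =>
    if h : p.1 - p.2 = 0 then 0 else Classical.choose (exists_dual_vector ℝ (p.1 - p.2) (norm_ne_zero_iff.mpr h))
    with hφ0def
  have hφ0norm : ∀ p : B × B, ‖φ0 p‖ ≤ 1 := by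
    intro p
    rw [hφ0def]
    dsimp only
    split
    · simp
    · rename_i h
      exact (Classical.choose_spec (exists_dual_vector ℝ (p.1 - p.2) (norm_ne_zero_iff.mpr h))).1.le
  have hφ0val : ∀ p : B × B, p.1 - p.2 ≠ 0 → φ0 p (p.1 - p.2) = ‖p.1 - p.2‖ := by
    intro p h
    rw [hφ0def]
    simp only [dif_neg h]
    exact_mod_cast (Classical.choose_spec (exists_dual_vector ℝ (p.1 - p.2) (norm_ne_zero_iff.mpr h))).2
  -- flattened family
  set lst : ℕ → List (B × B) := fun n => ((Fn n) ×ˢ (Fn n)).toList with hlstdef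
  set w : ℕ → ℝ := fun n => r n ^ (α - 1) with hwdef
  have hw0 : ∀ n, 0 < w n := fun n => Real.rpow_pos_of_pos (hr0 n) _
  set c : ℕ × ℕ → ℝ := fun j => if j.2 < (lst j.1).length then w j.1 else 0 with hcdef
  set ψ : ℕ × ℕ → (B →L[ℝ] ℝ) := fun j =>
    if h : j.2 < (lst j.1).length then φ0 ((lst j.1).get ⟨j.2, h⟩) else 0 with hψdef
  have hψnorm : ∀ j, ‖ψ j‖ ≤ 1 := by
    intro j
    rw [hψdef]
    dsimp only
    split
    · exact hφ0norm _
    · simp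
  have hc_nonneg : ∀ j, 0 ≤ c j := by
    intro j
    rw [hcdef]
    dsimp only
    split
    · exact (hw0 _).le
    · exact le_refl 0
  -- geometric bound on the flattened weights
  set A0 : ℝ := (8:ℝ)^D * (δ/2)^β with hA0def
  have hA00 : 0 < A0 := by
    rw [hA0def]
    have : (0:ℝ) < (8:ℝ)^D := Real.rpow_pos_of_pos (by norm_num) _
    have : (0:ℝ) < (δ/2)^β := Real.rpow_pos_of_pos (by linarith) _
    positivity
  set q0 : ℝ := (1/2:ℝ)^β with hq0def
  have hq00 : 0 < q0 := Real.rpow_pos_of_pos (by norm_num) _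
  have hq01 : q0 < 1 := Real.rpow_lt_one (by norm_num) (by norm_num) hβ0
  have hrβ : ∀ n : ℕ, (r n) ^ β = (δ/2)^β * q0^n := by
    intro n
    have h1 : r n = (δ/2) * (1/2:ℝ)^n := by rw [hrdef]; ring
    rw [h1, Real.mul_rpow (by linarith) (by positivity)]
    congr 1
    rw [← Real.rpow_natCast (1/2:ℝ) n, ← Real.rpow_mul (by norm_num), mul_comm,
      Real.rpow_mul (by norm_num), Real.rpow_natCast]
  have hA : ∀ n : ℕ, (sc n)^(-D) * (w n) = A0 * q0^n := by
    intro n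
    have h8 : sc n = r n / 8 := rfl
    have e1 : (sc n)^(-D) = (r n)^(-D) * (8:ℝ)^D := by
      rw [h8, Real.div_rpow (hr0 n).le (by norm_num : (0:ℝ) ≤ 8),
        Real.rpow_neg (by norm_num : (0:ℝ) ≤ 8) D]
      rw [div_inv_eq_mul]
    have hexp : -D + (α - 1) = β := by rw [hβdef]; ring
    calc (sc n)^(-D) * w n = ((r n)^(-D) * (r n)^(α-1)) * (8:ℝ)^D := by
          rw [e1, hwdef]; ring
      _ = (r n)^β * (8:ℝ)^D := by rw [← Real.rpow_add (hr0 n), hexp]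
      _ = A0 * q0^n := by rw [hrβ n, hA0def]; ring
  have hlenw : ∀ n : ℕ, ((lst n).length : ℝ) * (w n)^2 ≤ A0^2 * (q0^2)^n := by
    intro n
    have hlen : ((lst n).length : ℝ) = ((Fn n).card : ℝ)^2 := by
      rw [hlstdef]
      dsimp only
      rw [Finset.length_toList, Finset.card_product]
      push_cast
      ring
    have h1 : ((lst n).length : ℝ) * (w n)^2 = (((Fn n).card : ℝ) * w n)^2 := by
      rw [hlen]; ring
    rw [h1]
    have h2 : ((Fn n).card : ℝ) * w n ≤ (sc n)^(-D) * w n :=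
      mul_le_mul_of_nonneg_right (hcard n) (hw0 n).le
    have h3 : (0:ℝ) ≤ ((Fn n).card : ℝ) * w n := mul_nonneg (Nat.cast_nonneg _) (hw0 n).le
    calc (((Fn n).card : ℝ) * w n)^2 ≤ ((sc n)^(-D) * w n)^2 := by
          exact pow_le_pow_left₀ h3 h2 2
      _ = A0^2 * (q0^2)^n := by rw [hA n]; rw [mul_pow, ← pow_right_comm]
  have hgeo : Summable (fun n : ℕ => ((lst n).length : ℝ) * (w n)^2) := by
    refine Summable.of_nonneg_of_le (fun n => by positivity) hlenw ?_
    exact (summable_geometric_of_lt_one (by positivity) (by nlinarith)).mul_left _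
  have hc2 : Summable (fun j : ℕ × ℕ => (c j)^2) := by
    apply (summable_prod_of_nonneg (fun j => sq_nonneg _)).2
    constructor
    · intro n
      apply summable_of_ne_finset_zero (s := Finset.range (lst n).length)
      intro k hk
      rw [Finset.mem_range, not_lt] at hk
      have : c (n, k) = 0 := by rw [hcdef]; dsimp only; rw [if_neg (by omega)]
      rw [this]; ring
    · have key : ∀ n : ℕ, ∑' k : ℕ, (c (n, k))^2 = ((lst n).length : ℝ) * (w n)^2 := by
        intro n
        rw [tsum_eq_sum (s := Finset.range (lst n).length) ?_]
        · have : ∀ k ∈ Finset.range (lst n).length, (c (n,k))^2 = (w n)^2 := by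
            intro k hk
            rw [Finset.mem_range] at hk
            rw [hcdef]; dsimp only; rw [if_pos hk]
          rw [Finset.sum_congr rfl this, Finset.sum_const, Finset.card_range, nsmul_eq_mul]
        · intro k hk
          rw [Finset.mem_range, not_lt] at hk
          have : c (n, k) = 0 := by rw [hcdef]; dsimp only; rw [if_neg (by omega)]
          rw [this]; ring
      simp_rw [key]
      exact hgeo
  set S : ℝ := ∑' j : ℕ × ℕ, (c j)^2 with hSdef
  have hS0 : 0 ≤ S := tsum_nonneg (fun j => sq_nonneg _)
  -- pointwise bound on coordinates
  have hcoord : ∀ (v : B) (j : ℕ × ℕ), ‖c j * (ψ j v)‖^2 ≤ (c j)^2 * ‖v‖^2 := by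
    intro v j
    have h1 : ‖c j * (ψ j v)‖ = c j * |ψ j v| := by
      rw [norm_mul, Real.norm_eq_abs, Real.norm_eq_abs, abs_of_nonneg (hc_nonneg j)]
    have h2 : |ψ j v| ≤ ‖v‖ := by
      calc |ψ j v| ≤ ‖ψ j‖ * ‖v‖ := (ψ j).le_opNorm v
        _ ≤ 1 * ‖v‖ := mul_le_mul_of_nonneg_right (hψnorm j) (norm_nonneg v)
        _ = ‖v‖ := one_mul _
    rw [h1, mul_pow]
    exact mul_le_mul_of_nonneg_left (pow_le_pow_left₀ (abs_nonneg _) h2 2) (sq_nonneg _)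
  have hmem : ∀ v : B, Memℓp (fun j : ℕ × ℕ => c j * (ψ j v)) 2 := by
    intro v
    apply memℓp_gen
    have h2 : ((2:ℝ≥0∞)).toReal = (2:ℝ) := by simp
    rw [h2]
    simp_rw [Real.rpow_two]
    refine Summable.of_nonneg_of_le (fun j => sq_nonneg _) (fun j => hcoord v j)
      (hc2.mul_right (‖v‖^2))
  set Φf : B → lp (fun _ : ℕ × ℕ => ℝ) 2 := fun v => ⟨fun j => c j * (ψ j v), hmem v⟩
    with hΦfdef
  have hΦfapp : ∀ (v : B) (j : ℕ × ℕ), Φf v j = c j * (ψ j v) := fun v j => rfl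
  have hbound : ∀ v : B, ‖Φf v‖ ≤ Real.sqrt S * ‖v‖ := by
    intro v
    apply lp.norm_le_of_tsum_le (by norm_num) (by positivity)
    have h2 : ((2:ℝ≥0∞)).toReal = (2:ℝ) := by simp
    rw [h2]
    have hrhs : (Real.sqrt S * ‖v‖) ^ (2:ℝ) = S * ‖v‖^2 := by
      rw [Real.rpow_two, mul_pow, Real.sq_sqrt hS0]
    rw [hrhs]
    simp_rw [Real.rpow_two]
    calc (∑' j : ℕ × ℕ, ‖Φf v j‖^2) ≤ ∑' j : ℕ × ℕ, (c j)^2 * ‖v‖^2 := by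
          apply Summable.tsum_le_tsum _ _ (hc2.mul_right (‖v‖^2))
          · intro j
            rw [hΦfapp]
            exact hcoord v j
          · apply Summable.of_nonneg_of_le (fun j => sq_nonneg _) _ (hc2.mul_right (‖v‖^2))
            intro j
            rw [hΦfapp]
            exact hcoord v j
      _ = S * ‖v‖^2 := by rw [tsum_mul_right]
  set Φlin : B →ₗ[ℝ] lp (fun _ : ℕ × ℕ => ℝ) 2 :=
    { toFun := Φf
      map_add' := by
        intro u v
        apply lp.ext
        funext j
        rw [lp.coeFn_add]
        simp only [Pi.add_apply, hΦfapp, map_add]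
        ring
      map_smul' := by
        intro a v
        apply lp.ext
        funext j
        rw [lp.coeFn_smul]
        simp only [Pi.smul_apply, hΦfapp, map_smul, smul_eq_mul, RingHom.id_apply]
        ring } with hΦlindef
  set Φ : B →L[ℝ] lp (fun _ : ℕ × ℕ => ℝ) 2 := Φlin.mkContinuous (Real.sqrt S) hbound
    with hΦdef
  have hΦapp : ∀ v : B, Φ v = Φf v := fun v => rfl
  -- separation property at each scale
  have hsep : ∀ x ∈ X, ∀ y ∈ X, ∀ n : ℕ, r n ≤ ‖x - y‖ →
      ∃ j : ℕ × ℕ, c j = w n ∧ ‖x - y‖ / 2 ≤ |ψ j (x - y)| := by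
    intro x hx y hy n hrn
    have hd0 : (0:ℝ) < ‖x - y‖ := lt_of_lt_of_le (hr0 n) hrn
    have hxcov := (hFncov n) hx
    have hycov := (hFncov n) hy
    simp only [mem_iUnion, exists_prop] at hxcov hycov
    obtain ⟨a, haF, hax⟩ := hxcov
    obtain ⟨b, hbF, hby⟩ := hycov
    rw [mem_ball, dist_comm, dist_eq_norm] at hax hby
    have h8 : sc n = r n / 8 := rfl
    have htri : ‖x - y‖ ≤ ‖a - x‖ + ‖a - b‖ + ‖b - y‖ := by
      calc ‖x - y‖ = ‖-(a - x) + (a - b) + (b - y)‖ := by congr 1; abel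
        _ ≤ ‖-(a - x)‖ + ‖a - b‖ + ‖b - y‖ := norm_add₃_le
        _ = ‖a - x‖ + ‖a - b‖ + ‖b - y‖ := by rw [norm_neg]
    have hab : ‖x - y‖ - 2 * sc n ≤ ‖a - b‖ := by linarith
    have habne : a - b ≠ 0 := by
      intro h
      rw [h, norm_zero] at hab
      have := hr0 n
      linarith
    have hpmem : (a, b) ∈ lst n := by
      rw [hlstdef]
      dsimp only
      exact Finset.mem_toList.2 (Finset.mem_product.2 ⟨haF, hbF⟩)
    obtain ⟨k, hk⟩ := List.mem_iff_get.1 hpmem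
    refine ⟨(n, k.val), ?_, ?_⟩
    · rw [hcdef]; dsimp only; rw [if_pos k.isLt]
    · have hψj : ψ (n, k.val) = φ0 (a, b) := by
        rw [hψdef]
        dsimp only
        rw [dif_pos k.isLt]
        congr 1
      rw [hψj]
      have hval : (φ0 (a,b)) (a - b) = ‖a - b‖ := hφ0val (a,b) habne
      have habs : ∀ v : B, |(φ0 (a,b)) v| ≤ ‖v‖ := by
        intro v
        calc |(φ0 (a,b)) v| ≤ ‖φ0 (a,b)‖ * ‖v‖ := (φ0 (a,b)).le_opNorm v
          _ ≤ 1 * ‖v‖ := mul_le_mul_of_nonneg_right (hφ0norm _) (norm_nonneg v)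
          _ = ‖v‖ := one_mul _
      have hsplit : (φ0 (a,b)) (x - y)
          = -((φ0 (a,b)) (a - x)) + (φ0 (a,b)) (a - b) + (φ0 (a,b)) (b - y) := by
        rw [← map_neg, ← map_add, ← map_add]
        congr 1
        abel
      have h1 := abs_le.1 (habs (a - x))
      have h2 := abs_le.1 (habs (b - y))
      have hlow : ‖x - y‖ / 2 ≤ (φ0 (a,b)) (x - y) := by
        rw [hsplit, hval]
        have hsc : ‖a - x‖ ≤ sc n := hax.le
        have hsc2 : ‖b - y‖ ≤ sc n := hby.le
        have := hr0 n
        obtain ⟨h1l, h1r⟩ := h1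
        obtain ⟨h2l, h2r⟩ := h2
        have e1 : -(sc n) ≤ (φ0 (a,b)) (a - x) ∨ True := Or.inr trivial
        -- |φ(a-x)| ≤ ‖a-x‖ ≤ sc n etc.
        have f1 : -(sc n) ≤ -((φ0 (a,b)) (a - x)) := by linarith
        have f2 : -(sc n) ≤ (φ0 (a,b)) (b - y) := by linarith
        linarith
      exact le_trans hlow (le_abs_self _)
  -- constants
  set Cc : ℝ := max (Real.sqrt S) (max ((2:ℝ)^α) (2 * M^(α-1) * (δ/2)^(1-α))) with hCdef
  have hC2α : (2:ℝ)^α ≤ Cc := le_trans (le_max_left _ _) (le_max_right _ _)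
  have hC2' : 2 * M^(α-1) * (δ/2)^(1-α) ≤ Cc := le_trans (le_max_right _ _) (le_max_right _ _)
  have hCS : Real.sqrt S ≤ Cc := le_max_left _ _
  have hC0 : 0 < Cc := lt_of_lt_of_le (Real.rpow_pos_of_pos two_pos α) hC2α
  refine ⟨lp (fun _ : ℕ × ℕ => ℝ) 2, inferInstance, inferInstance, inferInstance, lp_sep,
    Φ, Cc, hC0, ?_⟩
  intro x hx y hy
  have hΦsub : Φ x - Φ y = Φf (x - y) := by
    rw [← map_sub Φ x y]
    exact hΦapp _
  constructor
  · -- lower bound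
    rcases eq_or_ne x y with rfl | hxy
    · have : ‖x - x‖ ^ α = 0 := by
        rw [sub_self, norm_zero, Real.zero_rpow (by linarith : α ≠ 0)]
      rw [this, mul_zero]
      exact norm_nonneg _
    · have hd0 : (0:ℝ) < ‖x - y‖ := by
        rw [norm_pos_iff]
        exact sub_ne_zero_of_ne hxy
      set d : ℝ := ‖x - y‖ with hddef
      have hex : ∃ n : ℕ, r n ≤ d := by
        obtain ⟨n, hn⟩ := exists_pow_lt_of_lt_one (div_pos hd0 hδ0)
          (by norm_num : (1/2:ℝ) < 1)
        refine ⟨n, ?_⟩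
        rw [hrdef]
        dsimp only
        have h1 : (1/2:ℝ)^(n+1) ≤ (1/2:ℝ)^n :=
          pow_le_pow_of_le_one (by norm_num) (by norm_num) (by omega)
        have h2 : δ * (1/2:ℝ)^n < δ * (d / δ) := mul_lt_mul_of_pos_left hn hδ0
        rw [mul_div_cancel₀ d hδ0.ne'] at h2
        nlinarith [hδ0]
      obtain ⟨n, hrn, hmin⟩ : ∃ n : ℕ, r n ≤ d ∧ min (δ/2) (d/2) ≤ r n := by
        refine ⟨Nat.find hex, Nat.find_spec hex, ?_⟩
        rcases Nat.eq_zero_or_pos (Nat.find hex) with h0 | hpos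
        · rw [h0]
          have : r 0 = δ/2 := by rw [hrdef]; ring
          rw [this]
          exact min_le_left _ _
        · have hn1 : Nat.find hex = (Nat.find hex - 1) + 1 := by omega
          have hm : ¬ r (Nat.find hex - 1) ≤ d := Nat.find_min hex (by omega)
          push_neg at hm
          rw [hn1, hrhalf]
          have : d / 2 < r (Nat.find hex - 1) / 2 := by linarith
          exact le_trans (min_le_right _ _) this.le
      obtain ⟨j, hcj, hj⟩ := hsep x hx y hy n hrn
      have hstep : w n * (d/2) ≤ ‖Φf (x - y)‖ := by
        have h1 : ‖Φf (x - y) j‖ ≤ ‖Φf (x - y)‖ :=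
          lp.norm_apply_le_norm (by norm_num) (Φf (x - y)) j
        have h2 : ‖Φf (x - y) j‖ = c j * |ψ j (x - y)| := by
          rw [hΦfapp, norm_mul, Real.norm_eq_abs, Real.norm_eq_abs,
            abs_of_nonneg (hc_nonneg j)]
        rw [h2, hcj] at h1
        refine le_trans ?_ h1
        exact mul_le_mul_of_nonneg_left hj (hw0 n).le
      rw [hΦsub, inv_mul_le_iff₀ hC0]
      have hfinal : d ^ α ≤ Cc * (w n * (d/2)) := by
        rcases le_or_gt d δ with hcase | hcase
        · have hminr : d/2 ≤ r n := le_trans (by rw [min_eq_right (by linarith)]) hmin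
          have hwge : (d/2)^(α-1) ≤ w n := by
            rw [hwdef]
            exact Real.rpow_le_rpow (by positivity) hminr (by linarith)
          have hid : d^α = (2:ℝ)^α * ((d/2)^(α-1) * (d/2)) := by
            have e1 : (d/2:ℝ)^(α-1) * (d/2) = (d/2)^α := by
              nth_rewrite 2 [show (d/2) = (d/2)^(1:ℝ) from (Real.rpow_one _).symm]
              rw [← Real.rpow_add (by positivity)]
              norm_num
            rw [e1, ← Real.mul_rpow (by norm_num) (by positivity)]
            congr 1
            ring
          rw [hid]
          have hnn : (0:ℝ) ≤ (d/2)^(α-1) * (d/2) := by positivity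
          calc (2:ℝ)^α * ((d/2)^(α-1) * (d/2)) ≤ Cc * ((d/2)^(α-1) * (d/2)) :=
                mul_le_mul_of_nonneg_right hC2α hnn
            _ ≤ Cc * (w n * (d/2)) := by
                apply mul_le_mul_of_nonneg_left _ hC0.le
                exact mul_le_mul_of_nonneg_right hwge (by positivity)
        · have hminr : δ/2 ≤ r n := le_trans (by rw [min_eq_left (by linarith)]) hmin
          have hwge : (δ/2)^(α-1) ≤ w n := by
            rw [hwdef]
            exact Real.rpow_le_rpow (by positivity) hminr (by linarith)
          have hdM' : d ≤ M := hdM x hx y hy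
          have hdα : d^α ≤ M^(α-1) * d := by
            have e1 : d^α = d^(α-1) * d := by
              nth_rewrite 3 [show d = d^(1:ℝ) from (Real.rpow_one _).symm]
              rw [← Real.rpow_add hd0]
              norm_num
            rw [e1]
            exact mul_le_mul_of_nonneg_right
              (Real.rpow_le_rpow hd0.le hdM' (by linarith)) hd0.le
          have hkey : M^(α-1) * d ≤ Cc * (w n * (d/2)) := by
            have e2 : (δ/2:ℝ)^(1-α) * (δ/2)^(α-1) = 1 := by
              rw [← Real.rpow_add (by positivity)]
              norm_num
            have hc2 : (2 * M^(α-1) * (δ/2)^(1-α)) * ((δ/2)^(α-1) * (d/2))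
                = M^(α-1) * d := by
              have : (2 * M^(α-1) * (δ/2)^(1-α)) * ((δ/2)^(α-1) * (d/2))
                  = M^(α-1) * d * ((δ/2)^(1-α) * (δ/2)^(α-1)) := by ring
              rw [this, e2, mul_one]
            calc M^(α-1) * d = (2 * M^(α-1) * (δ/2)^(1-α)) * ((δ/2)^(α-1) * (d/2)) :=
                  hc2.symm
              _ ≤ Cc * ((δ/2)^(α-1) * (d/2)) := by
                  apply mul_le_mul_of_nonneg_right hC2' (by positivity)
              _ ≤ Cc * (w n * (d/2)) := by
                  apply mul_le_mul_of_nonneg_left _ hC0.le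
                  exact mul_le_mul_of_nonneg_right hwge (by positivity)
          exact le_trans hdα hkey
      exact le_trans hfinal (mul_le_mul_of_nonneg_left hstep hC0.le)
  · -- upper bound
    rw [hΦsub]
    exact le_trans (hbound _) (mul_le_mul_of_nonneg_right hCS (norm_nonneg _))
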